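/- Let D be a directed set with a least element ⊥ and consider a single-unknown monotone function f : D → D together with widening ▽ and narrowing △ satisfying the standard chain conditions. Define the sequence: u₀ = ⊥, u_{i+1} = u_i ▽ f(u_i) until some index m with f(u_m) ⊑ u_m; then v₀ = u_m, v_{j+1} = v_j △ f(v_j). Then: (1) the ascending phase reaches such an m; (2) every v_j satisfies f(v_j) ⊑ v_j (each v_j is a post-fixpoint); (3) the descending phase is eventually stationary, and its limit v is a post-fixpoint of f with v ⊑ u_m. -/
import Mathlib


theorem stmt13 {D : Type*} [PartialOrder D] [OrderBot D]
    (hdir : ∀ a b : D, ∃ c, a ≤ c ∧ b ≤ c)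
    (w nar : D → D → D)
    (hw1 : ∀ a b, a ≤ w a b) (hw2 : ∀ a b, b ≤ w a b)
    (hn : ∀ a b, b ≤ a → b ≤ nar a b ∧ nar a b ≤ a)
    (hwterm : ∀ d b : ℕ → D, (∀ i, d (i+1) = w (d i) (b i)) →
      ∃ N, ∀ m, N ≤ m → d m = d N)
    (hnterm : ∀ d b : ℕ → D, (∀ i, b i ≤ d i ∧ d (i+1) = nar (d i) (b i)) →
      ∃ N, ∀ m, N ≤ m → d m = d N)
    (f : D → D) (hf : Monotone f)
    (u : ℕ → D) (hu0 : u 0 = ⊥) (hu : ∀ i, u (i+1) = w (u i) (f (u i))) :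
    ∃ m, f (u m) ≤ u m ∧
      ∀ v : ℕ → D, v 0 = u m → (∀ j, v (j+1) = nar (v j) (f (v j))) →
        (∀ j, f (v j) ≤ v j) ∧
        ∃ J, (∀ j, J ≤ j → v j = v J) ∧ v J ≤ u m ∧ f (v J) ≤ v J := by
  obtain ⟨N, hN⟩ := hwterm u (fun i => f (u i)) hu
  have hfix : f (u N) ≤ u N := by
    have h1 : u (N+1) = u N := hN (N+1) (Nat.le_succ N)
    calc f (u N) ≤ w (u N) (f (u N)) := hw2 _ _
      _ = u (N+1) := (hu N).symm
      _ = u N := h1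
  refine ⟨N, hfix, fun v hv0 hvs => ?_⟩
  have hpost : ∀ j, f (v j) ≤ v j := by
    intro j
    induction j with
    | zero => rw [hv0]; exact hfix
    | succ k ih =>
      have h := hn (v k) (f (v k)) ih
      have hle : v (k+1) ≤ v k := by rw [hvs k]; exact h.2
      calc f (v (k+1)) ≤ f (v k) := hf hle
        _ ≤ v (k+1) := by rw [hvs k]; exact h.1
  have hdec : ∀ j, v j ≤ v 0 := by
    intro j
    induction j with
    | zero => exact le_refl _
    | succ k ih =>
      exact le_trans (by rw [hvs k]; exact (hn (v k) (f (v k)) (hpost k)).2) ih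
  obtain ⟨J, hJ⟩ := hnterm v (fun j => f (v j))
    (fun j => ⟨hpost j, hvs j⟩)
  exact ⟨hpost, J, hJ, hv0 ▸ hdec J, hpost J⟩
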